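/- For every real α > 1 and integer n ≥ 3, 2·((2n)^α + 2^α)^(1/α) + (2^(α+1))^(1/α) − 3·(4^α + 2^α)^(1/α) > ((6^α + 2^α)^(1/α) + (2^(α+1))^(1/α)) − 2·(4^α + 2^α)^(1/α) > 0. -/

import Mathlib

open Real Set

lemma mink_strict {α a b c d : ℝ} (hα : 1 < α) (ha : 0 < a) (hb : 0 < b)
    (hc : 0 < c) (hd : 0 < d) (hne : a * d ≠ b * c) :
    ((a + c) ^ α + (b + d) ^ α) ^ (1/α) < (a ^ α + b ^ α) ^ (1/α) + (c ^ α + d ^ α) ^ (1/α) := by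
  have hα0 : (0:ℝ) < α := lt_trans one_pos hα
  set A := (a ^ α + b ^ α) ^ (1/α) with hA
  set C := (c ^ α + d ^ α) ^ (1/α) with hC
  have habα : 0 < a ^ α + b ^ α := by positivity
  have hcdα : 0 < c ^ α + d ^ α := by positivity
  have hApos : 0 < A := Real.rpow_pos_of_pos habα _
  have hCpos : 0 < C := Real.rpow_pos_of_pos hcdα _
  have hACpos : 0 < A + C := by positivity
  have hAα : A ^ α = a ^ α + b ^ α := by
    rw [hA, one_div, Real.rpow_inv_rpow habα.le hα0.ne']
  have hCα : C ^ α = c ^ α + d ^ α := by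
    rw [hC, one_div, Real.rpow_inv_rpow hcdα.le hα0.ne']
  clear_value A C
  clear hA hC
  have key : (a + c) ^ α + (b + d) ^ α < (A + C) ^ α := by
    obtain ⟨l, hl⟩ : ∃ l : ℝ, l = A / (A + C) := ⟨_, rfl⟩
    obtain ⟨m, hm⟩ : ∃ m : ℝ, m = C / (A + C) := ⟨_, rfl⟩
    have hlm : l + m = 1 := by
      rw [hl, hm, ← add_div, div_self hACpos.ne']
    have hl0 : 0 < l := hl ▸ div_pos hApos hACpos
    have hm0 : 0 < m := hm ▸ div_pos hCpos hACpos
    have conv := strictConvexOn_rpow hα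
    have e1 : a + c = (A + C) * (l * (a/A) + m * (c/C)) := by
      rw [hl, hm]; field_simp
    have e2 : b + d = (A + C) * (l * (b/A) + m * (d/C)) := by
      rw [hl, hm]; field_simp
    have hstrict : ∀ x y : ℝ, 0 ≤ x → 0 ≤ y → x ≠ y →
        (l * x + m * y) ^ α < l * x ^ α + m * y ^ α := by
      intro x y hx hy hxy
      have := conv.2 (mem_Ici.2 hx) (mem_Ici.2 hy) hxy hl0 hm0 hlm
      simpa [smul_eq_mul] using this
    have hle : ∀ x y : ℝ, 0 ≤ x → 0 ≤ y →
        (l * x + m * y) ^ α ≤ l * x ^ α + m * y ^ α := by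
      intro x y hx hy
      have := conv.convexOn.2 (mem_Ici.2 hx) (mem_Ici.2 hy) hl0.le hm0.le hlm
      simpa [smul_eq_mul] using this
    have hsum : (l * (a/A) + m * (c/C)) ^ α + (l * (b/A) + m * (d/C)) ^ α
        < l * ((a/A) ^ α + (b/A) ^ α) + m * ((c/C) ^ α + (d/C) ^ α) := by
      by_cases h1 : a / A = c / C
      · have h2 : b / A ≠ d / C := by
          intro h2
          apply hne
          have e1' : a * C = c * A := (div_eq_div_iff hApos.ne' hCpos.ne').1 h1
          have e2' : b * C = d * A := (div_eq_div_iff hApos.ne' hCpos.ne').1 h2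
          have h3 : a * d * (A * C) = b * c * (A * C) := by
            linear_combination (d * A) * e1' - (c * A) * e2'
          exact mul_right_cancel₀ (by positivity) h3
        have b1 := hle (a/A) (c/C) (by positivity) (by positivity)
        have b2 := hstrict (b/A) (d/C) (by positivity) (by positivity) h2
        nlinarith
      · have b1 := hstrict (a/A) (c/C) (by positivity) (by positivity) h1
        have b2 := hle (b/A) (d/C) (by positivity) (by positivity)
        nlinarith
    have hdiv : (a/A) ^ α + (b/A) ^ α = 1 := by
      rw [Real.div_rpow ha.le hApos.le, Real.div_rpow hb.le hApos.le, ← add_div, hAα,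
        div_self habα.ne']
    have hdiv2 : (c/C) ^ α + (d/C) ^ α = 1 := by
      rw [Real.div_rpow hc.le hCpos.le, Real.div_rpow hd.le hCpos.le, ← add_div, hCα,
        div_self hcdα.ne']
    have pos1 : 0 ≤ l * (a/A) + m * (c/C) := by
      have h1 := mul_nonneg hl0.le (div_nonneg ha.le hApos.le)
      have h2 := mul_nonneg hm0.le (div_nonneg hc.le hCpos.le)
      linarith
    have pos2 : 0 ≤ l * (b/A) + m * (d/C) := by
      have h1 := mul_nonneg hl0.le (div_nonneg hb.le hApos.le)
      have h2 := mul_nonneg hm0.le (div_nonneg hd.le hCpos.le)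
      linarith
    calc (a + c) ^ α + (b + d) ^ α
        = (A + C) ^ α * ((l * (a/A) + m * (c/C)) ^ α + (l * (b/A) + m * (d/C)) ^ α) := by
          rw [e1, e2, Real.mul_rpow hACpos.le pos1, Real.mul_rpow hACpos.le pos2]; ring
      _ < (A + C) ^ α * (l * ((a/A) ^ α + (b/A) ^ α) + m * ((c/C) ^ α + (d/C) ^ α)) :=
          (mul_lt_mul_iff_right₀ (Real.rpow_pos_of_pos hACpos α)).2 hsum
      _ = (A + C) ^ α := by rw [hdiv, hdiv2, mul_one, mul_one, hlm, mul_one]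
  have h := Real.rpow_lt_rpow (by positivity) key (by positivity : (0:ℝ) < 1/α)
  rw [one_div]
  rwa [one_div, Real.rpow_rpow_inv hACpos.le hα0.ne'] at h

theorem stmt_19 (α : ℝ) (hα : 1 < α) (n : ℕ) (hn : 3 ≤ n) :
    2 * ((2 * (n : ℝ)) ^ α + 2 ^ α) ^ (1 / α) + ((2 : ℝ) ^ (α + 1)) ^ (1 / α) -
        3 * ((4 : ℝ) ^ α + 2 ^ α) ^ (1 / α) >
      (((6 : ℝ) ^ α + 2 ^ α) ^ (1 / α) + ((2 : ℝ) ^ (α + 1)) ^ (1 / α)) -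
        2 * ((4 : ℝ) ^ α + 2 ^ α) ^ (1 / α) ∧
      (((6 : ℝ) ^ α + 2 ^ α) ^ (1 / α) + ((2 : ℝ) ^ (α + 1)) ^ (1 / α)) -
        2 * ((4 : ℝ) ^ α + 2 ^ α) ^ (1 / α) > 0 := by
  have hα0 : (0:ℝ) < α := lt_trans one_pos hα
  have h1α : (0:ℝ) < 1/α := by positivity
  have hn6 : (6:ℝ) ≤ 2 * n := by
    have : (3:ℝ) ≤ n := by exact_mod_cast hn
    linarith
  constructor
  · have h64 : ((4:ℝ) ^ α + 2 ^ α) ^ (1/α) < ((6:ℝ) ^ α + 2 ^ α) ^ (1/α) := by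
      apply Real.rpow_lt_rpow (by positivity) _ h1α
      have : (4:ℝ) ^ α < 6 ^ α := Real.rpow_lt_rpow (by norm_num) (by norm_num) hα0
      linarith
    have h2n : ((6:ℝ) ^ α + 2 ^ α) ^ (1/α) ≤ ((2 * (n:ℝ)) ^ α + 2 ^ α) ^ (1/α) := by
      apply Real.rpow_le_rpow (by positivity) _ h1α.le
      have : (6:ℝ) ^ α ≤ (2 * n) ^ α := Real.rpow_le_rpow (by norm_num) hn6 hα0.le
      linarith
    linarith
  · have h2exp : ((2:ℝ) ^ (α + 1)) ^ (1/α) = ((2:ℝ) ^ α + 2 ^ α) ^ (1/α) := by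
      congr 1
      rw [Real.rpow_add (by norm_num), Real.rpow_one]; ring
    have h2f4 : ((8:ℝ) ^ α + 4 ^ α) ^ (1/α) = 2 * ((4:ℝ) ^ α + 2 ^ α) ^ (1/α) := by
      have e : (8:ℝ) ^ α + 4 ^ α = (2:ℝ) ^ α * (4 ^ α + 2 ^ α) := by
        rw [mul_add, ← Real.mul_rpow (by norm_num) (by norm_num),
          ← Real.mul_rpow (by norm_num) (by norm_num)]
        norm_num
      rw [e, Real.mul_rpow (by positivity) (by positivity), one_div,
        Real.rpow_rpow_inv (by norm_num) hα0.ne']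
    have hmk := mink_strict (α := α) (a := 2) (b := 2) (c := 6) (d := 2) hα
      (by norm_num) (by norm_num) (by norm_num) (by norm_num) (by norm_num)
    have h86 : ((2:ℝ) + 6) ^ α = 8 ^ α := by norm_num
    have h24 : ((2:ℝ) + 2) ^ α = 4 ^ α := by norm_num
    rw [h86, h24] at hmk
    rw [h2exp]
    rw [← h2f4] at *
    linarith
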